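/- Let A be an algebra, V a semisimple A-module, and e₁,…,e_m ∈ End_A(V) idempotents. Then there is an algebra isomorphism End_A(⊕_{i=1}^m e_i V) ≅ ⊕_{i,j=1}^m e_i End_A(V) e_j, where the product on the right is given by (e_i φ e_j)·(e_k ψ e_ℓ) = δ_{jk} e_i (φ e_j ψ) e_ℓ. -/

import Mathlib

open Finset

/-- Absorption: if `a` is idempotent and `a * x * b = x` then `a * x = x`. -/
theorem absorb_left {B : Type*} [Ring B] {a b x : B} (ha : a * a = a)
    (h : a * x * b = x) : a * x = x := by
  conv_lhs => rw [← h]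
  rw [← mul_assoc, ← mul_assoc, ha, h]

theorem absorb_right {B : Type*} [Ring B] {a b x : B} (hb : b * b = b)
    (h : a * x * b = x) : x * b = x := by
  conv_lhs => rw [← h]
  rw [mul_assoc (a * x) b b, hb, h]

/-- A family of distinguished idempotents in a ring `B`. -/
structure IdemFamily (B : Type*) [Ring B] (m : ℕ) where
  e : Fin m → B
  idem : ∀ i, e i * e i = e i

variable {B : Type*} [Ring B] {m : ℕ}

/-- The painted algebra `B̃ = ⊕_{i,j} e_i B e_j`, realized as the non-unital subring of
`m × m` matrices over `B` whose `(i,j)` entry lies in `e_i B e_j`.  Its multiplication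
`(e_i b e_j)·(e_k b' e_ℓ) = δ_{jk} e_i b e_j b' e_ℓ` is exactly matrix multiplication. -/
def paintedSubring (E : IdemFamily B m) : NonUnitalSubring (Matrix (Fin m) (Fin m) B) where
  carrier := {x | ∀ i j, E.e i * x i j * E.e j = x i j}
  zero_mem' := by intro i j; simp
  add_mem' := by
    intro x y hx hy i j
    have : (x + y) i j = x i j + y i j := rfl
    rw [this, mul_add, add_mul, hx i j, hy i j]
  neg_mem' := by
    intro x hx i j
    have : (-x) i j = -(x i j) := rfl
    rw [this, mul_neg, neg_mul, hx i j]
  mul_mem' := by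
    intro x y hx hy i j
    show E.e i * (x * y) i j * E.e j = (x * y) i j
    simp only [Matrix.mul_apply, Finset.mul_sum, Finset.sum_mul]
    refine Finset.sum_congr rfl fun l _ => ?_
    rw [← mul_assoc, absorb_left (E.idem i) (hx i l), mul_assoc,
      absorb_right (E.idem j) (hy l j)]

/-- The painted algebra associated to a family of idempotents. -/
def PaintedAlgebra (E : IdemFamily B m) : Type _ := ↥(paintedSubring E)

instance (E : IdemFamily B m) : NonUnitalRing (PaintedAlgebra E) :=
  inferInstanceAs (NonUnitalRing ↥(paintedSubring E))

/-- The painted algebra is a (unital) ring, with unit the diagonal matrix `diag(e₁,…,e_m)`. -/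
instance (E : IdemFamily B m) : Ring (PaintedAlgebra E) :=
  { (inferInstanceAs (NonUnitalRing (PaintedAlgebra E)) : NonUnitalRing (PaintedAlgebra E)) with
    one := ⟨Matrix.diagonal E.e, by
      intro i j
      by_cases h : i = j
      · subst h; simp [Matrix.diagonal_apply_eq, E.idem i]
      · simp [Matrix.diagonal_apply_ne _ h]⟩
    one_mul := by
      intro x
      apply Subtype.ext
      ext i j
      show (Matrix.diagonal E.e * x.val) i j = x.val i j
      rw [Matrix.diagonal_mul]
      exact absorb_left (E.idem i) (x.prop i j)
    mul_one := by
      intro x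
      apply Subtype.ext
      ext i j
      show (x.val * Matrix.diagonal E.e) i j = x.val i j
      rw [Matrix.mul_diagonal]
      exact absorb_right (E.idem j) (x.prop i j) }

open scoped DirectSum

/-- Let `A` be an algebra, `V` a semisimple `A`-module and
`e₁,…,e_m ∈ End_A(V)` idempotents.  Then there is an algebra isomorphism
`End_A(⊕_{i=1}^m e_i V) ≅ ⊕_{i,j=1}^m e_i End_A(V) e_j`, where the right-hand side is the
painted algebra with product `(e_i φ e_j)·(e_k ψ e_ℓ) = δ_{jk} e_i (φ e_j ψ) e_ℓ`. -/
theorem stmt4 {A : Type*} [Ring A] (V : Type*) [AddCommGroup V] [Module A V]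
    [IsSemisimpleModule A V] {m : ℕ} (e : Fin m → Module.End A V)
    (he : ∀ i, e i * e i = e i) :
    Nonempty ((Module.End A (⨁ i : Fin m, ↥(LinearMap.range (e i)))) ≃+*
      PaintedAlgebra ⟨e, he⟩) := by
  classical
  set W : Fin m → Type _ := fun i => ↥(LinearMap.range (e i)) with hWdef
  let ι : ∀ i, W i →ₗ[A] V := fun i => (LinearMap.range (e i)).subtype
  let π : ∀ i, V →ₗ[A] W i := fun i => (e i).rangeRestrict
  have heι : ∀ i (w : W i), e i (w : V) = (w : V) := by
    intro i w
    obtain ⟨v, hv⟩ := w.2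
    rw [← hv, ← Module.End.mul_apply, he]
  have hπι : ∀ i (w : W i), π i (ι i w) = w := by
    intro i w; exact Subtype.ext (heι i w)
  let L : ∀ i, W i →ₗ[A] (⨁ i, W i) := fun i => DirectSum.lof A (Fin m) W i
  let C : ∀ i, (⨁ i, W i) →ₗ[A] W i := fun i => DirectSum.component A (Fin m) W i
  have hCL : ∀ i j (w : W j), C i (L j w) = if h : j = i then h ▸ w else 0 :=
    fun i j w => DirectSum.component.of A i j w
  have hsum : ∀ y : ⨁ i, W i, ∑ i, L i (C i y) = y := by
    intro y
    exact DirectSum.sum_univ_of y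
  let Φ : Module.End A (⨁ i, W i) → Matrix (Fin m) (Fin m) (Module.End A V) :=
    fun F i j => ι i ∘ₗ C i ∘ₗ F ∘ₗ L j ∘ₗ π j
  have hΦmem : ∀ F, Φ F ∈ paintedSubring (⟨e, he⟩ : IdemFamily (Module.End A V) m) := by
    intro F i j
    ext v
    show e i (ι i (C i (F (L j (π j (e j v)))))) = ι i (C i (F (L j (π j v))))
    have h1 : π j (e j v) = π j v := Subtype.ext (by
      show e j (e j v) = e j v
      rw [← Module.End.mul_apply, he])
    rw [h1]
    exact heι i _
  let Ψ : PaintedAlgebra (⟨e, he⟩ : IdemFamily (Module.End A V) m) →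
      Module.End A (⨁ i, W i) :=
    fun x => ∑ i, ∑ j, L i ∘ₗ π i ∘ₗ x.val i j ∘ₗ ι j ∘ₗ C j
  refine ⟨{ toFun := fun F => ⟨Φ F, hΦmem F⟩
            invFun := Ψ
            left_inv := ?_
            right_inv := ?_
            map_mul' := ?_
            map_add' := ?_ }⟩
  · -- left inverse
    intro F
    show Ψ ⟨Φ F, hΦmem F⟩ = F
    refine DirectSum.linearMap_ext _ fun j => LinearMap.ext fun w => ?_
    simp only [LinearMap.comp_apply]
    show (∑ i, ∑ k, L i ∘ₗ π i ∘ₗ Φ F i k ∘ₗ ι k ∘ₗ C k) (L j w) = F (L j w)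
    simp only [LinearMap.sum_apply, LinearMap.comp_apply]
    have step1 : ∀ i, ∑ k, L i (π i ((Φ F i k) (ι k (C k (L j w))))) =
        L i (π i ((Φ F i j) (ι j w))) := by
      intro i
      rw [Finset.sum_eq_single j]
      · rw [hCL]; simp
      · intro k _ hk
        rw [hCL, dif_neg (fun h => hk h.symm)]
        simp
      · simp
    rw [Finset.sum_congr rfl fun i _ => step1 i]
    have h2 : ∀ i, (Φ F i j) (ι j w) = ι i (C i (F (L j w))) := by
      intro i
      show ι i (C i (F (L j (π j (ι j w))))) = _
      rw [hπι]
    simp_rw [h2, hπι]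
    exact hsum _
  · -- right inverse
    intro x
    apply Subtype.ext
    ext i j v : 3
    show ι i (C i ((Ψ x) (L j (π j v)))) = x.val i j v
    have h1 : (Ψ x) (L j (π j v)) = ∑ k, L k (π k (x.val k j (ι j (π j v)))) := by
      show (∑ k, ∑ l, L k ∘ₗ π k ∘ₗ x.val k l ∘ₗ ι l ∘ₗ C l) (L j (π j v)) = _
      simp only [LinearMap.sum_apply, LinearMap.comp_apply]
      refine Finset.sum_congr rfl fun k _ => ?_
      rw [Finset.sum_eq_single j]
      · rw [hCL]; simp
      · intro l _ hl
        rw [hCL, dif_neg (fun h => hl h.symm)]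
        simp
      · simp
    rw [h1, map_sum, map_sum, Finset.sum_eq_single i]
    · rw [hCL, dif_pos rfl]
      show (e i) ((x.val i j) ((e j) v)) = x.val i j v
      have := congrArg (fun f => f v) (x.prop i j)
      simpa using this
    · intro k _ hk
      rw [hCL, dif_neg hk]
      simp
    · simp
  · -- multiplicative
    intro F G
    apply Subtype.ext
    ext i j v : 3
    show (Φ (F * G) i j) v = ((Φ F * Φ G) i j) v
    rw [Matrix.mul_apply, LinearMap.sum_apply]
    have hterm : ∀ l, (Φ F i l * Φ G l j) v =
        ι i (C i (F (L l (C l (G (L j (π j v))))))) := by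
      intro l
      show ι i (C i (F (L l (π l (ι l (C l (G (L j (π j v))))))))) = _
      rw [hπι]
    calc (Φ (F * G) i j) v = ι i (C i (F (G (L j (π j v))))) := rfl
      _ = ι i (C i (F (∑ l, L l (C l (G (L j (π j v))))))) := by rw [hsum]
      _ = ∑ l, (Φ F i l * Φ G l j) v := by
          rw [map_sum, map_sum, map_sum]
          exact (Finset.sum_congr rfl fun l _ => (hterm l).symm)
  · -- additive
    intro F G
    apply Subtype.ext
    ext i j v : 3
    show ι i (C i ((F + G) (L j (π j v)))) = (Φ F i j) v + (Φ G i j) v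
    simp only [LinearMap.add_apply, map_add]
    rfl
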